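/- Let X be a sequential T1 regular space. Then F(X), the set of nonempty finite subsets of X, is an open subset of the hyperspace K(X) of nonempty compact subsets with the Vietoris topology if and only if X is discrete. -/

import Mathlib

open Set TopologicalSpace

universe u v

/-- The Fell topology on the collection of all subsets of `X`, generated by the subbase
consisting of the sets `U⁻ = {H | H ∩ U ≠ ∅}` for `U` open and
`(Kᶜ)⁺ = {H | H ⊆ Kᶜ}` for `K` compact. -/
def fellTopology (X : Type u) [TopologicalSpace X] : TopologicalSpace (Set X) :=
  TopologicalSpace.generateFrom
    ({S | ∃ U : Set X, IsOpen U ∧ S = {H : Set X | (H ∩ U).Nonempty}} ∪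
     {S | ∃ K : Set X, IsCompact K ∧ S = {H : Set X | H ⊆ Kᶜ}})

/-- The Vietoris topology on the collection of all subsets of `X`, generated by the subbase
consisting of the sets `U⁺ = {H | H ⊆ U}` and `U⁻ = {H | H ∩ U ≠ ∅}` for `U` open. -/
def vietorisTopology (X : Type u) [TopologicalSpace X] : TopologicalSpace (Set X) :=
  TopologicalSpace.generateFrom
    ({S | ∃ U : Set X, IsOpen U ∧ S = {H : Set X | H ⊆ U}} ∪
     {S | ∃ U : Set X, IsOpen U ∧ S = {H : Set X | (H ∩ U).Nonempty}})

/-- A collection `S` of subsets of `X`, viewed as a hyperspace with the Fell topology. -/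
def FellHyper (X : Type u) [TopologicalSpace X] (S : Set (Set X)) : Type u :=
  {A : Set X // A ∈ S}

/-- A collection `S` of subsets of `X`, viewed as a hyperspace with the Vietoris topology. -/
def VietorisHyper (X : Type u) [TopologicalSpace X] (S : Set (Set X)) : Type u :=
  {A : Set X // A ∈ S}

instance FellHyper.instTopologicalSpace (X : Type u) [TopologicalSpace X] (S : Set (Set X)) :
    TopologicalSpace (FellHyper X S) :=
  TopologicalSpace.induced (Subtype.val : {A : Set X // A ∈ S} → Set X) (fellTopology X)

instance VietorisHyper.instTopologicalSpace (X : Type u) [TopologicalSpace X] (S : Set (Set X)) :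
    TopologicalSpace (VietorisHyper X S) :=
  TopologicalSpace.induced (Subtype.val : {A : Set X // A ∈ S} → Set X) (vietorisTopology X)

/-- The underlying subset of `X` of a point of a Fell hyperspace. -/
def FellHyper.carrier {X : Type u} [TopologicalSpace X] {S : Set (Set X)}
    (A : FellHyper X S) : Set X :=
  Subtype.val A

/-- The underlying subset of `X` of a point of a Vietoris hyperspace. -/
def VietorisHyper.carrier {X : Type u} [TopologicalSpace X] {S : Set (Set X)}
    (A : VietorisHyper X S) : Set X :=
  Subtype.val A

/-- `CL(X)`: the nonempty closed subsets of `X`. -/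
def CL (X : Type u) [TopologicalSpace X] : Set (Set X) := {A | A.Nonempty ∧ IsClosed A}

/-- `𝒦(X)`: the nonempty compact subsets of `X`. -/
def Kcal (X : Type u) [TopologicalSpace X] : Set (Set X) := {A | A.Nonempty ∧ IsCompact A}

/-- `ℱ(X)`: the nonempty finite subsets of `X`. -/
def Fcal (X : Type u) : Set (Set X) := {A | A.Nonempty ∧ A.Finite}

/-- `ℱₙ(X)`: the nonempty subsets of `X` with at most `n` points. -/
def Fn (X : Type u) (n : ℕ) : Set (Set X) := {A | A.Nonempty ∧ A.encard ≤ n}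

/-- A space is a `D₁`-space if every nonempty closed subset has a countable
neighborhood base. -/
def IsD1Space (Y : Type v) [TopologicalSpace Y] : Prop :=
  ∀ F : Set Y, F.Nonempty → IsClosed F →
    ∃ B : ℕ → Set Y, (∀ n, IsOpen (B n) ∧ F ⊆ B n) ∧
      ∀ V : Set Y, IsOpen V → F ⊆ V → ∃ n, B n ⊆ V

/-- A space is a `D₀`-space if every nonempty compact subset has a countable
neighborhood base. -/
def IsD0Space (Y : Type v) [TopologicalSpace Y] : Prop :=
  ∀ F : Set Y, F.Nonempty → IsCompact F →
    ∃ B : ℕ → Set Y, (∀ n, IsOpen (B n) ∧ F ⊆ B n) ∧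
      ∀ V : Set Y, IsOpen V → F ⊆ V → ∃ n, B n ⊆ V

/-- A space has a `G_δ`-diagonal if the diagonal is a `G_δ`-set in `X × X`. -/
def HasGdeltaDiagonal (X : Type u) [TopologicalSpace X] : Prop :=
  ∃ U : ℕ → Set (X × X), (∀ n, IsOpen (U n)) ∧ (⋂ n, U n) = {p : X × X | p.1 = p.2}

/-- A space is perfect if every closed subset is a `G_δ`-set. -/
def IsPerfectSpace (Y : Type v) [TopologicalSpace Y] : Prop :=
  ∀ F : Set Y, IsClosed F → ∃ U : ℕ → Set Y, (∀ n, IsOpen (U n)) ∧ F = ⋂ n, U n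

/-- A space has the compact-`G_δ` property if every compact subset is a `G_δ`-set. -/
def CompactGDeltaProperty (Y : Type v) [TopologicalSpace Y] : Prop :=
  ∀ K : Set Y, IsCompact K → ∃ U : ℕ → Set Y, (∀ n, IsOpen (U n)) ∧ K = ⋂ n, U n

/-- `γ`-space. -/
def IsGammaSpace (Y : Type v) [TopologicalSpace Y] : Prop :=
  ∃ g : ℕ → Y → Set Y,
    (∀ n y, IsOpen (g n y) ∧ y ∈ g n y) ∧
    (∀ y, ∀ V : Set Y, IsOpen V → y ∈ V → ∃ n, g n y ⊆ V) ∧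
    (∀ n y, ∃ m, ∀ z ∈ g m y, g m z ⊆ g n y)

/-- A space has a `G_δ*`-diagonal if there is a sequence `𝒰 n` of open covers such that
`{x} = ⋂ n, closure (st(x, 𝒰 n))` for every `x`. -/
def HasGdeltaStarDiagonal (X : Type u) [TopologicalSpace X] : Prop :=
  ∃ 𝒰 : ℕ → Set (Set X),
    (∀ n, ∀ U ∈ 𝒰 n, IsOpen U) ∧ (∀ n, ⋃₀ 𝒰 n = univ) ∧
    ∀ x : X, (⋂ n, closure (⋃₀ {U ∈ 𝒰 n | x ∈ U})) = {x}

lemma vietoris_key {X : Type u} [TopologicalSpace X] {t : Set (Set X)}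
    (h : TopologicalSpace.GenerateOpen
      ({S | ∃ U : Set X, IsOpen U ∧ S = {H : Set X | H ⊆ U}} ∪
       {S | ∃ U : Set X, IsOpen U ∧ S = {H : Set X | (H ∩ U).Nonempty}}) t)
    {x : X} (hx : {x} ∈ t) :
    ∃ W : Set X, IsOpen W ∧ x ∈ W ∧ ∀ H : Set X, x ∈ H → H ⊆ W → H ∈ t := by
  induction h with
  | basic s hs =>
    rcases hs with ⟨U, hU, rfl⟩ | ⟨U, hU, rfl⟩
    · exact ⟨U, hU, hx rfl, fun H _ hHW => hHW⟩
    · obtain ⟨y, hy1, hy2⟩ := hx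
      rcases hy1 with rfl
      exact ⟨U, hU, hy2, fun H hxH hHW => ⟨y, hxH, hy2⟩⟩
  | univ => exact ⟨univ, isOpen_univ, mem_univ x, fun _ _ _ => mem_univ _⟩
  | inter s₁ s₂ _ _ ih1 ih2 =>
    obtain ⟨W1, hW1, hx1, h1⟩ := ih1 hx.1
    obtain ⟨W2, hW2, hx2, h2⟩ := ih2 hx.2
    exact ⟨W1 ∩ W2, hW1.inter hW2, ⟨hx1, hx2⟩,
      fun H hxH hHW => ⟨h1 H hxH (hHW.trans inter_subset_left),
        h2 H hxH (hHW.trans inter_subset_right)⟩⟩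
  | sUnion S _ ih =>
    obtain ⟨s, hs, hxs⟩ := hx
    obtain ⟨W, hW, hxW, h'⟩ := ih s hs hxs
    exact ⟨W, hW, hxW, fun H hxH hHW => ⟨s, hs, h' H hxH hHW⟩⟩

/-- for sequential `X`, `ℱ(X)` is open in `(𝒦(X), τ_V)` iff `X` is discrete. -/
theorem statement8 (X : Type u) [TopologicalSpace X] [T1Space X] [RegularSpace X]
    [SequentialSpace X] :
    IsOpen {A : VietorisHyper X (Kcal X) | A.carrier.Finite} ↔ DiscreteTopology X := by
  constructor
  · intro h
    rw [discreteTopology_iff_isOpen_singleton]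
    intro x
    obtain ⟨t, ht, hts⟩ := h
    have hxt : ({x} : Set X) ∈ t := by
      have hA : (⟨{x}, singleton_nonempty x, isCompact_singleton⟩ :
          VietorisHyper X (Kcal X)) ∈ {A : VietorisHyper X (Kcal X) | A.carrier.Finite} :=
        finite_singleton x
      rw [← hts] at hA
      exact hA
    obtain ⟨W, hWopen, hxW, hkey⟩ := vietoris_key ht hxt
    rw [← isClosed_compl_iff]
    apply IsSeqClosed.isClosed
    intro u p hu hup
    by_contra hpx
    rw [mem_compl_iff, not_not, mem_singleton_iff] at hpx
    rw [hpx] at hup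
    obtain ⟨N, hN⟩ := Filter.eventually_atTop.mp (hup.eventually_mem (hWopen.mem_nhds hxW))
    set v : ℕ → X := fun n => u (n + N) with hv
    have hvt : Filter.Tendsto v Filter.atTop (nhds x) :=
      hup.comp (Filter.tendsto_add_atTop_nat N)
    set H : Set X := insert x (Set.range v) with hH
    have hHcomp : IsCompact H := hvt.isCompact_insert_range
    have hHW : H ⊆ W := insert_subset hxW
      (range_subset_iff.mpr fun n => hN (n + N) (Nat.le_add_left N n))
    have hHt : H ∈ t := hkey H (mem_insert x _) hHW
    have hHfin : H.Finite := by
      have : (⟨H, ⟨x, mem_insert x _⟩, hHcomp⟩ : VietorisHyper X (Kcal X)) ∈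
          (Subtype.val ⁻¹' t : Set (VietorisHyper X (Kcal X))) := hHt
      rw [hts] at this
      exact this
    have hrfin : (Set.range v).Finite := hHfin.subset (subset_insert _ _)
    have hev : ∀ᶠ n in Filter.atTop, ∀ y ∈ Set.range v, v n ≠ y := by
      apply hrfin.eventually_all.mpr
      intro y hy
      have hxy : x ∈ ({y}ᶜ : Set X) := by
        obtain ⟨m, rfl⟩ := hy
        intro hh
        exact hu (m + N) (mem_singleton_iff.mpr (mem_singleton_iff.mp hh).symm)
      exact hvt.eventually_mem (isOpen_compl_singleton.mem_nhds hxy)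
    obtain ⟨n, hn⟩ := hev.exists
    exact hn (v n) ⟨n, rfl⟩ rfl
  · intro hD
    have : {A : VietorisHyper X (Kcal X) | A.carrier.Finite} = univ := by
      refine eq_univ_of_forall fun A => ?_
      exact A.2.2.finite_of_discrete
    rw [this]
    exact isOpen_univ
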